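/- For G₊(x) = |1 + e(x) + e(3x)|² and G₋(x) = |1 + e(x) - e(3x)|², we have |G₊''(x)| < 2200 · G₊(x) and |G₋''(x)| < 4000 · G₋(x) for all x ∈ ℝ. -/

import Mathlib

open Real Complex

private lemma hd_cos' (c x : ℝ) :
    HasDerivAt (fun y : ℝ => Real.cos (c * y)) (-(Real.sin (c * x)) * c) x := by
  simpa [Function.comp_def] using (Real.hasDerivAt_cos (c * x)).comp x ((hasDerivAt_id x).const_mul c)

private lemma hd_sin' (c x : ℝ) :
    HasDerivAt (fun y : ℝ => Real.sin (c * y)) (Real.cos (c * x) * c) x := by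
  simpa [Function.comp_def] using (Real.hasDerivAt_sin (c * x)).comp x ((hasDerivAt_id x).const_mul c)

private lemma deriv2_trig (e1 e2 e3 x : ℝ) :
    deriv (deriv (fun y : ℝ => 3 + e1 * Real.cos (2*π*y) + e2 * Real.cos (4*π*y) + e3 * Real.cos (6*π*y))) x
    = -(e1*4*π^2) * Real.cos (2*π*x) - (e2*16*π^2) * Real.cos (4*π*x) - (e3*36*π^2) * Real.cos (6*π*x) := by
  have hD1 : deriv (fun y : ℝ => 3 + e1 * Real.cos (2*π*y) + e2 * Real.cos (4*π*y) + e3 * Real.cos (6*π*y))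
      = fun y : ℝ => e1 * (-(Real.sin (2*π*y)) * (2*π)) + e2 * (-(Real.sin (4*π*y)) * (4*π))
        + e3 * (-(Real.sin (6*π*y)) * (6*π)) := by
    funext y
    have h := ((((hasDerivAt_const y (3:ℝ)).add ((hd_cos' (2*π) y).const_mul e1)).add
      ((hd_cos' (4*π) y).const_mul e2)).add ((hd_cos' (6*π) y).const_mul e3)).deriv
    exact h.trans (by ring)
  rw [hD1]
  have hD2 : HasDerivAt (fun y : ℝ => e1 * (-(Real.sin (2*π*y)) * (2*π)) + e2 * (-(Real.sin (4*π*y)) * (4*π))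
        + e3 * (-(Real.sin (6*π*y)) * (6*π)))
      (e1 * (-(Real.cos (2*π*x) * (2*π)) * (2*π)) + e2 * (-(Real.cos (4*π*x) * (4*π)) * (4*π))
        + e3 * (-(Real.cos (6*π*x) * (6*π)) * (6*π))) x := by
    have h1 := (((hd_sin' (2*π) x).neg.mul_const (2*π)).const_mul e1)
    have h2 := (((hd_sin' (4*π) x).neg.mul_const (4*π)).const_mul e2)
    have h3 := (((hd_sin' (6*π) x).neg.mul_const (6*π)).const_mul e3)
    simpa [Pi.add_def] using (h1.add h2).add h3
  rw [hD2.deriv]; ring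

private lemma abs_sq_eq (ε : ℝ) (hε : ε = 1 ∨ ε = -1) (x : ℝ) :
    (‖1 + Complex.exp (2 * π * Complex.I * x) +
        (ε : ℂ) * Complex.exp (2 * π * Complex.I * (3 * x))‖) ^ 2
    = 3 + 2 * Real.cos (2*π*x) + (2*ε) * Real.cos (4*π*x) + (2*ε) * Real.cos (6*π*x) := by
  have h1 : (2 * π * Complex.I * x : ℂ) = ((2*π*x : ℝ) : ℂ) * Complex.I := by push_cast; ring
  have h2 : (2 * π * Complex.I * (3*x) : ℂ) = ((6*π*x : ℝ) : ℂ) * Complex.I := by push_cast; ring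
  have hε2 : ε^2 = 1 := by rcases hε with h | h <;> rw [h] <;> norm_num
  rw [h1, h2, Complex.sq_norm]
  rw [Complex.exp_mul_I, Complex.exp_mul_I]
  simp only [Complex.normSq_apply, Complex.add_re, Complex.add_im, Complex.mul_re, Complex.mul_im,
    Complex.I_re, Complex.I_im, Complex.cos_ofReal_re, Complex.cos_ofReal_im,
    Complex.sin_ofReal_re, Complex.sin_ofReal_im, Complex.one_re, Complex.one_im,
    Complex.ofReal_re, Complex.ofReal_im]
  have hc : Real.cos (4*π*x) = Real.cos (6*π*x - 2*π*x) := by ring_nf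
  rw [hc, Real.cos_sub]
  have s1 := Real.sin_sq_add_cos_sq (2*π*x)
  have s3 := Real.sin_sq_add_cos_sq (6*π*x)
  ring_nf
  ring_nf at s1 s3
  nlinarith [s1, s3, hε2]

theorem stmt_12
    (Gp Gm : ℝ → ℝ)
    (hGp : ∀ x : ℝ, Gp x = (‖1 + Complex.exp (2 * π * Complex.I * x) +
        Complex.exp (2 * π * Complex.I * (3 * x))‖) ^ 2)
    (hGm : ∀ x : ℝ, Gm x = (‖1 + Complex.exp (2 * π * Complex.I * x) -
        Complex.exp (2 * π * Complex.I * (3 * x))‖) ^ 2) :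
    ∀ x : ℝ, |deriv (deriv Gp) x| < 2200 * Gp x ∧ |deriv (deriv Gm) x| < 4000 * Gm x := by
  have hGp' : Gp = fun x : ℝ => 3 + 2 * Real.cos (2*π*x) + 2 * Real.cos (4*π*x) + 2 * Real.cos (6*π*x) := by
    funext x
    rw [hGp x]
    have := abs_sq_eq 1 (Or.inl rfl) x
    simpa using this
  have hGm' : Gm = fun x : ℝ => 3 + 2 * Real.cos (2*π*x) + (-2) * Real.cos (4*π*x) + (-2) * Real.cos (6*π*x) := by
    funext x
    rw [hGm x]
    have := abs_sq_eq (-1) (Or.inr rfl) x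
    simp only [Complex.ofReal_neg, Complex.ofReal_one, neg_one_mul, neg_mul, one_mul] at this ⊢
    rw [show (1 + Complex.exp (2 * π * Complex.I * x) - Complex.exp (2 * π * Complex.I * (3 * x)))
      = (1 + Complex.exp (2 * π * Complex.I * x) + -Complex.exp (2 * π * Complex.I * (3 * x))) by ring]
    rw [this]; ring
  intro x
  have hq1 : (9.869600 : ℝ) < π^2 := by nlinarith [Real.pi_gt_d6]
  have hq2 : π^2 < (9.869607 : ℝ) := by nlinarith [Real.pi_lt_d6, Real.pi_gt_d6]
  set u : ℝ := Real.cos (2*π*x) with hu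
  have h1 : -1 ≤ u := Real.neg_one_le_cos _
  have h2 : u ≤ 1 := Real.cos_le_one _
  have hc2 : Real.cos (4*π*x) = 2*u^2 - 1 := by
    rw [show (4*π*x) = 2*(2*π*x) by ring, Real.cos_two_mul]
  have hc3 : Real.cos (6*π*x) = 4*u^3 - 3*u := by
    rw [show (6*π*x) = 3*(2*π*x) by ring, Real.cos_three_mul]
  have ha : (0:ℝ) ≤ 1 + u := by linarith
  have hb : (0:ℝ) ≤ 1 - u := by linarith
  constructor
  · rw [hGp', show (2:ℝ) = 2 from rfl]
    have hD := deriv2_trig 2 2 2 x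
    rw [hD]
    simp only [hc2, hc3, ← hu]
    rw [abs_lt]
    set q : ℝ := π^2
    constructor
    · nlinarith [mul_nonneg ha (sq_nonneg (u - 0.6)), mul_nonneg hb (sq_nonneg (u + 0.62)),
        mul_nonneg ha hb, sq_nonneg (u - 0.6), sq_nonneg (u + 0.62),
        mul_nonneg (mul_nonneg ha hb) (sq_nonneg (u - 0.6))]
    · nlinarith [mul_nonneg ha (sq_nonneg (u - 0.2967)), mul_nonneg hb (sq_nonneg (u - 0.1236)),
        mul_nonneg ha hb, sq_nonneg (u - 0.2967), sq_nonneg (u - 0.1236)]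
  · rw [hGm']
    have hD := deriv2_trig 2 (-2) (-2) x
    rw [hD]
    simp only [hc2, hc3, ← hu]
    rw [abs_lt]
    set q : ℝ := π^2
    constructor
    · nlinarith [mul_nonneg ha (sq_nonneg (u + 0.7676)), mul_nonneg hb (sq_nonneg (u - 0.4)),
        mul_nonneg ha hb, sq_nonneg (u + 0.7676), sq_nonneg (u - 0.4),
        mul_nonneg (mul_nonneg ha hb) (sq_nonneg (u + 0.7676))]
    · nlinarith [mul_nonneg ha (sq_nonneg (u + 0.6892)), mul_nonneg hb (sq_nonneg (u + 0.7531)),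
        mul_nonneg ha hb, sq_nonneg (u + 0.6892), sq_nonneg (u + 0.7531)]
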